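/- The identity x^n = x^{n+1} holds in the monoid of upper triangular Boolean n×n matrices: for every upper triangular Boolean n×n matrix A, A^n = A^{n+1} (powers computed with Boolean matrix multiplication). -/
import Mathlib


/-- Boolean matrix multiplication: entry `(i,j)` of `A·B` is `1` iff
`max_k min(A i k, B k j) = 1`, i.e. iff some `k` has `A i k = B k j = 1`. -/
def bmul {n : ℕ} (A B : Matrix (Fin n) (Fin n) Bool) : Matrix (Fin n) (Fin n) Bool :=
  fun i j => decide (∃ k, A i k ∧ B k j)

/-- The identity Boolean matrix. -/
def bId (n : ℕ) : Matrix (Fin n) (Fin n) Bool := fun i j => decide (i = j)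

/-- Powers of a Boolean matrix under Boolean matrix multiplication. -/
def bpow {n : ℕ} (A : Matrix (Fin n) (Fin n) Bool) : ℕ → Matrix (Fin n) (Fin n) Bool
  | 0 => bId n
  | k + 1 => bmul (bpow A k) A

/-- A Boolean matrix is upper triangular if `a_{ij} = 0` whenever `j < i`. -/
def UpperTri {n : ℕ} (A : Matrix (Fin n) (Fin n) Bool) : Prop :=
  ∀ i j : Fin n, j < i → A i j = false

lemma bpow_succ' {n : ℕ} (A : Matrix (Fin n) (Fin n) Bool) (m : ℕ) :
    bpow A (m + 1) = bmul (bpow A m) A := rfl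

lemma bmul_eq_true' {n : ℕ} {B C : Matrix (Fin n) (Fin n) Bool} {i j : Fin n} :
    bmul B C i j = true ↔ ∃ k, B i k = true ∧ C k j = true := by
  simp [bmul]

lemma le_of_bpow' {n : ℕ} {A : Matrix (Fin n) (Fin n) Bool} (hA : UpperTri A) :
    ∀ m (i j : Fin n), bpow A m i j = true → i ≤ j := by
  intro m
  induction m with
  | zero =>
    intro i j h
    simp [bpow, bId] at h
    exact h.le
  | succ m ih =>
    intro i j h
    rw [bpow_succ', bmul_eq_true'] at h
    obtain ⟨k, h1, h2⟩ := h
    have hik := ih i k h1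
    have hkj : k ≤ j := by
      by_contra hc
      rw [hA k j (lt_of_not_ge hc)] at h2
      exact Bool.false_ne_true h2
    exact le_trans hik hkj

lemma extend' {n : ℕ} {A : Matrix (Fin n) (Fin n) Bool} (hA : UpperTri A) :
    ∀ m (i j : Fin n), bpow A m i j = true → j.val - i.val < m →
      bpow A (m + 1) i j = true := by
  intro m
  induction m with
  | zero => intro i j h hlt; omega
  | succ m ih =>
    intro i j h hlt
    rw [bpow_succ', bmul_eq_true'] at h
    obtain ⟨k, h1, h2⟩ := h
    have hik : i.val ≤ k.val := Fin.le_def.mp (le_of_bpow' hA m i k h1)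
    have hkj : k ≤ j := by
      by_contra hc
      rw [hA k j (lt_of_not_ge hc)] at h2
      exact Bool.false_ne_true h2
    have hkj' : k.val ≤ j.val := Fin.le_def.mp hkj
    by_cases hm : k.val - i.val < m
    · rw [bpow_succ', bmul_eq_true']
      exact ⟨k, ih i k h1 hm, h2⟩
    · have hkeq : k = j := Fin.le_antisymm hkj (Fin.le_def.mpr (by omega))
      subst hkeq
      rw [bpow_succ', bmul_eq_true']
      refine ⟨k, ?_, h2⟩
      rw [bpow_succ', bmul_eq_true']
      exact ⟨k, h1, h2⟩

lemma shrink' {n : ℕ} {A : Matrix (Fin n) (Fin n) Bool} (hA : UpperTri A) :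
    ∀ m (i j : Fin n), bpow A (m + 1) i j = true → j.val - i.val ≤ m →
      bpow A m i j = true := by
  intro m
  induction m with
  | zero =>
    intro i j h hle
    rw [bpow_succ', bmul_eq_true'] at h
    obtain ⟨k, h1, h2⟩ := h
    simp [bpow, bId] at h1
    subst h1
    have hij : i ≤ j := by
      by_contra hc
      rw [hA i j (lt_of_not_ge hc)] at h2
      exact Bool.false_ne_true h2
    have : i = j := Fin.le_antisymm hij (Fin.le_def.mpr (by omega))
    subst this
    simp [bpow, bId]
  | succ m ih =>
    intro i j h hle
    rw [bpow_succ', bmul_eq_true'] at h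
    obtain ⟨k, h1, h2⟩ := h
    have hik : i.val ≤ k.val := Fin.le_def.mp (le_of_bpow' hA (m + 1) i k h1)
    have hkj : k ≤ j := by
      by_contra hc
      rw [hA k j (lt_of_not_ge hc)] at h2
      exact Bool.false_ne_true h2
    have hkj' : k.val ≤ j.val := Fin.le_def.mp hkj
    by_cases hm : k.val - i.val ≤ m
    · rw [bpow_succ', bmul_eq_true']
      exact ⟨k, ih i k h1 hm, h2⟩
    · have hkeq : k = j := Fin.le_antisymm hkj (Fin.le_def.mpr (by omega))
      subst hkeq
      exact h1

/-- The identity `x^n = x^{n+1}` holds in the monoid of upper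
triangular Boolean `n×n` matrices. -/
theorem upperTri_pow_stable (n : ℕ) (A : Matrix (Fin n) (Fin n) Bool)
    (hA : UpperTri A) : bpow A n = bpow A (n + 1) := by
  funext i j
  have hj : j.val < n := j.isLt
  exact Bool.eq_iff_iff.mpr
    ⟨fun h => extend' hA n i j h (by omega),
     fun h => shrink' hA n i j h (by omega)⟩
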